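/- There is a constant C > 0 such that for every integer n ≥ 2 there exists a graph G on [n] with at most C·n·log n edges such that for every pair 1 ≤ i < j ≤ n there is a straight path from i to j in G using at most 2 edges (i.e., G is a 2-hop exact spanner of [n]). -/

import Mathlib

open Finset

attribute [local instance] Classical.propDecidable

noncomputable section

/-- There is a straight path (strictly increasing vertex sequence) from `i` to `j` in `H`. -/
def HasStraightPath {n : ℕ} (H : SimpleGraph (Fin n)) (i j : Fin n) : Prop :=
  ∃ (m : ℕ) (f : Fin (m + 1) → Fin n),
    f 0 = i ∧ f (Fin.last m) = j ∧ StrictMono f ∧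
    ∀ t : Fin m, H.Adj (f t.castSucc) (f t.succ)

/-- There is a straight path from `i` to `j` in `H` using at most `k` edges. -/
def HasStraightPathHop {n : ℕ} (H : SimpleGraph (Fin n)) (i j : Fin n) (k : ℕ) : Prop :=
  ∃ (m : ℕ) (f : Fin (m + 1) → Fin n), m ≤ k ∧
    f 0 = i ∧ f (Fin.last m) = j ∧ StrictMono f ∧
    ∀ t : Fin m, H.Adj (f t.castSucc) (f t.succ)

/-- The deficiency: number of pairs `i < j` with no straight path from `i` to `j`. -/
def deficiency {n : ℕ} (H : SimpleGraph (Fin n)) : ℕ :=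
  (Finset.univ.filter fun pq : Fin n × Fin n =>
    pq.1 < pq.2 ∧ ¬ HasStraightPath H pq.1 pq.2).card

/-- Expectation of `F` over the random subgraph of `G` keeping each edge
independently with probability `p`. -/
def graphExpect {V : Type} [Fintype V] (G : SimpleGraph V) (p : ℝ)
    (F : SimpleGraph V → ℝ) : ℝ :=
  ∑ S ∈ G.edgeFinset.powerset,
    p ^ S.card * (1 - p) ^ (G.edgeFinset.card - S.card) *
      F (SimpleGraph.fromEdgeSet (S : Set (Sym2 V)))

/-- Probability of the event `A` for the random subgraph of `G` keeping each edge
independently with probability `p`. -/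
def graphProb {V : Type} [Fintype V] (G : SimpleGraph V) (p : ℝ)
    (A : SimpleGraph V → Prop) : ℝ :=
  ∑ S ∈ G.edgeFinset.powerset.filter
      (fun (S : Finset (Sym2 V)) => A (SimpleGraph.fromEdgeSet (S : Set (Sym2 V)))),
    p ^ S.card * (1 - p) ^ (G.edgeFinset.card - S.card)

/-- The optimal deficiency `ℓ(n,p)`: expected deficiency of `D(K_n, p)`. -/
def optDeficiency (n : ℕ) (p : ℝ) : ℝ :=
  graphExpect (⊤ : SimpleGraph (Fin n)) p (fun H => (deficiency H : ℝ))



-- hub lemma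
lemma exists_hub (a b : ℕ) (h : a < b) : ∃ k, b / 2^k = a / 2^k + 1 := by
  induction b using Nat.strong_induction_on generalizing a with
  | _ b ih =>
    by_cases hd : a / 2 = b / 2
    · exact ⟨0, by simpa using by omega⟩
    · have h2 : a / 2 < b / 2 := lt_of_le_of_ne (Nat.div_le_div_right h.le) hd
      have hb : b / 2 < b := Nat.div_lt_self (by omega) (by norm_num)
      obtain ⟨k, hk⟩ := ih (b/2) hb (a/2) h2
      refine ⟨k+1, ?_⟩
      have e : (2:ℕ)^(k+1) = 2 * 2^k := by ring
      rw [e, ← Nat.div_div_eq_div_mul, ← Nat.div_div_eq_div_mul]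
      exact hk

def spanGraph (n : ℕ) : SimpleGraph (Fin n) where
  Adj a b := a ≠ b ∧ ∃ k : ℕ,
      (b:ℕ) = ((a:ℕ)/2^k+1)*2^k ∨ (a:ℕ) = ((b:ℕ)/2^k+1)*2^k ∨
      (b:ℕ) = ((a:ℕ)/2^k)*2^k ∨ (a:ℕ) = ((b:ℕ)/2^k)*2^k
  symm := by
    constructor
    rintro a b ⟨hne, k, h⟩
    exact ⟨hne.symm, k, by tauto⟩
  loopless := by constructor; rintro a ⟨hne, -⟩; exact hne rfl

section paths
variable {n : ℕ} {H : SimpleGraph (Fin n)}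

lemma path1 {i j : Fin n} (hij : i < j) (h : H.Adj i j) : HasStraightPathHop H i j 2 := by
  refine ⟨1, ![i, j], by norm_num, rfl, rfl, ?_, ?_⟩
  · intro a b hab
    fin_cases a <;> fin_cases b <;> simp_all <;> omega
  · intro t
    fin_cases t
    simpa using h

lemma path2 {i m j : Fin n} (h1 : i < m) (h2 : m < j)
    (a1 : H.Adj i m) (a2 : H.Adj m j) : HasStraightPathHop H i j 2 := by
  refine ⟨2, ![i, m, j], le_refl _, rfl, rfl, ?_, ?_⟩
  · intro a b hab
    fin_cases a <;> fin_cases b <;> simp_all <;> omega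
  · intro t
    fin_cases t <;> simpa using by first | exact a1 | exact a2
end paths

lemma spanGraph_path {n : ℕ} (i j : Fin n) (hij : i < j) :
    HasStraightPathHop (spanGraph n) i j 2 := by
  obtain ⟨k, hk⟩ := exists_hub (i:ℕ) (j:ℕ) hij
  set m : ℕ := ((j:ℕ)/2^k)*2^k with hm
  have hmup : m = ((i:ℕ)/2^k+1)*2^k := by rw [hm, hk]
  have him : (i:ℕ) < m := by
    have h1 := Nat.lt_div_mul_add (a := (i:ℕ)) (b := 2^k) (by positivity)
    have h2 : ((i:ℕ)/2^k+1)*2^k = ((i:ℕ)/2^k)*2^k + 2^k := by ring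
    omega
  have hmj : m ≤ (j:ℕ) := Nat.div_mul_le_self _ _
  rcases eq_or_lt_of_le hmj with he | hl
  · -- m = j : one hop
    refine path1 hij ⟨Fin.ne_of_lt hij, k, Or.inl ?_⟩
    omega
  · -- two hops via m
    have hmn : m < n := lt_trans hl j.isLt
    refine path2 (i := i) (m := ⟨m, hmn⟩) (j := j) ?_ ?_ ?_ ?_
    · exact him
    · exact hl
    · exact ⟨by intro he; exact absurd (congrArg Fin.val he) (by simp; omega), k, Or.inl (by simpa using hmup)⟩
    · exact ⟨by intro he; exact absurd (congrArg Fin.val he) (by simp; omega), k, Or.inr (Or.inr (Or.inr (by simp; exact hm)))⟩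

def hubMap (n : ℕ) : Fin n × ℕ × Bool → Sym2 (Fin n)
  | (x, k, true) =>
      if h : ((x:ℕ)/2^k+1)*2^k < n then s(x, (⟨((x:ℕ)/2^k+1)*2^k, h⟩ : Fin n)) else s(x, x)
  | (x, k, false) =>
      s(x, (⟨((x:ℕ)/2^k)*2^k,
        lt_of_le_of_lt (Nat.div_mul_le_self _ _) x.isLt⟩ : Fin n))

lemma mem_up {n k : ℕ} (x y : Fin n) (hxy : (y:ℕ) = ((x:ℕ)/2^k+1)*2^k) :
    s(x,y) ∈ Finset.image (hubMap n)
      (Finset.univ ×ˢ (Finset.range (Nat.log 2 n + 2) ×ˢ Finset.univ)) := by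
  have h2k : 2^k ≤ (y:ℕ) := by
    rw [hxy]
    exact Nat.le_mul_of_pos_left _ (Nat.succ_pos _)
  have hy0 : (y:ℕ) ≠ 0 := by have := Nat.one_le_two_pow (n := k); omega
  have hk1 : k ≤ Nat.log 2 (y:ℕ) := (Nat.le_log_iff_pow_le (by norm_num) hy0).mpr h2k
  have hk2 : k ≤ Nat.log 2 n := hk1.trans (Nat.log_mono_right y.isLt.le)
  refine Finset.mem_image.mpr ⟨(x, k, true), ?_, ?_⟩
  · simp only [Finset.mem_product, Finset.mem_univ, Finset.mem_range, true_and, and_true]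
    omega
  · show (if h : ((x:ℕ)/2^k+1)*2^k < n then
        s(x, (⟨((x:ℕ)/2^k+1)*2^k, h⟩ : Fin n)) else s(x, x)) = s(x,y)
    rw [dif_pos (hxy ▸ y.isLt)]
    congr 1
    exact Fin.ext hxy.symm

lemma mem_down {n k : ℕ} (x y : Fin n) (hxy : (y:ℕ) = ((x:ℕ)/2^k)*2^k) :
    s(x,y) ∈ Finset.image (hubMap n)
      (Finset.univ ×ˢ (Finset.range (Nat.log 2 n + 2) ×ˢ Finset.univ)) := by
  by_cases hc : 2^k ≤ (x:ℕ)
  · have hx0 : (x:ℕ) ≠ 0 := by have := Nat.one_le_two_pow (n := k); omega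
    have hk1 : k ≤ Nat.log 2 (x:ℕ) := (Nat.le_log_iff_pow_le (by norm_num) hx0).mpr hc
    have hk2 : k ≤ Nat.log 2 n := hk1.trans (Nat.log_mono_right x.isLt.le)
    refine Finset.mem_image.mpr ⟨(x, k, false), ?_, ?_⟩
    · simp only [Finset.mem_product, Finset.mem_univ, Finset.mem_range, true_and, and_true]
      omega
    · show s(x, (⟨((x:ℕ)/2^k)*2^k, _⟩ : Fin n)) = s(x,y)
      congr 1
      exact Fin.ext hxy.symm
  · push_neg at hc
    have hy0 : (y:ℕ) = 0 := by rw [hxy, Nat.div_eq_of_lt hc, zero_mul]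
    set k' := Nat.log 2 (x:ℕ) + 1 with hk'
    have hxk' : (x:ℕ) < 2^k' := Nat.lt_pow_succ_log_self (by norm_num) _
    have hk2 : k' < Nat.log 2 n + 2 := by
      have : Nat.log 2 (x:ℕ) ≤ Nat.log 2 n := Nat.log_mono_right x.isLt.le
      omega
    refine Finset.mem_image.mpr ⟨(x, k', false), ?_, ?_⟩
    · simp only [Finset.mem_product, Finset.mem_univ, Finset.mem_range, true_and, and_true]
      omega
    · show s(x, (⟨((x:ℕ)/2^k')*2^k', _⟩ : Fin n)) = s(x,y)
      congr 1
      have hv : ((x:ℕ)/2^k')*2^k' = (y:ℕ) := by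
        rw [Nat.div_eq_of_lt hxk', zero_mul, hy0]
      exact Fin.ext hv

lemma edge_subset (n : ℕ) :
    (spanGraph n).edgeFinset ⊆ Finset.image (hubMap n)
      (Finset.univ ×ˢ (Finset.range (Nat.log 2 n + 2) ×ˢ Finset.univ)) := by
  intro e he
  rw [SimpleGraph.mem_edgeFinset] at he
  induction e with
  | _ a b =>
    obtain ⟨hne, k, hcase⟩ := he
    rcases hcase with h | h | h | h
    · exact mem_up a b h
    · exact Sym2.eq_swap ▸ mem_up b a h
    · exact mem_down a b h
    · exact Sym2.eq_swap ▸ mem_down b a h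

lemma spanGraph_card (n : ℕ) (hn : 2 ≤ n) :
    ((spanGraph n).edgeFinset.card : ℝ) ≤ 12 * n * Real.log n := by
  set L : ℕ := Nat.log 2 n with hL
  have hcard : (spanGraph n).edgeFinset.card ≤ n * ((L + 2) * 2) := by
    calc (spanGraph n).edgeFinset.card
        ≤ (Finset.image (hubMap n)
          (Finset.univ ×ˢ (Finset.range (L + 2) ×ˢ Finset.univ))).card :=
          Finset.card_le_card (edge_subset n)
      _ ≤ _ := by
          refine (Finset.card_image_le).trans ?_
          simp [Finset.card_product]
  have hpow : (2:ℝ)^L ≤ (n:ℝ) := by exact_mod_cast Nat.pow_log_le_self 2 (by omega)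
  have hlog : (L:ℝ) * Real.log 2 ≤ Real.log n := by
    have : Real.log ((2:ℝ)^L) ≤ Real.log n := Real.log_le_log (by positivity) hpow
    rwa [Real.log_pow] at this
  have h2 : (0.6931471803 : ℝ) < Real.log 2 := Real.log_two_gt_d9
  have hln : Real.log 2 ≤ Real.log n :=
    Real.log_le_log (by norm_num) (by exact_mod_cast hn)
  have hLle : (L:ℝ) ≤ 2 * Real.log n := by nlinarith
  have h1 : ((spanGraph n).edgeFinset.card : ℝ) ≤ (n:ℝ) * ((L:ℝ) + 2) * 2 := by
    calc ((spanGraph n).edgeFinset.card : ℝ)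
        ≤ ((n * ((L + 2) * 2) : ℕ) : ℝ) := Nat.cast_le.mpr hcard
      _ = (n:ℝ) * ((L:ℝ) + 2) * 2 := by push_cast; ring
  have hn1 : (1:ℝ) ≤ (n:ℝ) := by exact_mod_cast Nat.one_le_of_lt hn
  nlinarith [Real.log_nonneg hn1]

theorem stmt_11 :
    ∃ C : ℝ, 0 < C ∧
      ∀ n : ℕ, 2 ≤ n →
        ∃ G : SimpleGraph (Fin n),
          (G.edgeFinset.card : ℝ) ≤ C * (n : ℝ) * Real.log (n : ℝ) ∧
          ∀ i j : Fin n, i < j → HasStraightPathHop G i j 2 := by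
  exact ⟨12, by norm_num, fun n hn =>
    ⟨spanGraph n, spanGraph_card n hn, fun i j hij => spanGraph_path i j hij⟩⟩
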